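/- arXiv:1201.3543 — 5 statements merged into one kernel-verified Lean document; each statement's English description precedes it below -/
import Mathlib

section
/- For every pseudo-Boolean function f: {0,1}^n → ℝ and every S ⊆ N, the Banzhaf interaction index satisfies I_B(f,S) = 2^{|S|} ⟨f, v_S⟩, where v_S(x) = Π_{i∈S}(2x_i − 1) and ⟨f,g⟩ = 2^{-n} Σ_{x∈{0,1}^n} f(x)g(x). -/
open Finset

/-- The discrete `S`-derivative (difference) of a set function:
`Δ_S f (T) = Σ_{R⊆S} (−1)^{|S|−|R|} f(T∪R)`, the closed form of the recursion
`Δ_∅ f = f`, `Δ_{{i}} f(x) = f(x|x_i=1) − f(x|x_i=0)`, `Δ_S f = Δ_{{i}} Δ_{S∖{i}} f`. -/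
noncomputable def deltaD {n : ℕ} (S : Finset (Fin n)) (f : Finset (Fin n) → ℝ) (T : Finset (Fin n)) : ℝ :=
  ∑ R ∈ S.powerset, (-1 : ℝ) ^ (S.card - R.card) * f (T ∪ R)

/-- The Banzhaf interaction index `I_B(f,S) = 2^{-(n-|S|)} Σ_{T⊆N∖S} (Δ_S f)(T)`. -/
noncomputable def banzhafInteraction {n : ℕ} (f : Finset (Fin n) → ℝ) (S : Finset (Fin n)) : ℝ :=
  (1 / 2 ^ (n - S.card)) * ∑ T ∈ (univ \ S).powerset, deltaD S f T

lemma prod_sign {n : ℕ} (S X : Finset (Fin n)) :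
    ∏ i ∈ S, (2 * (if i ∈ X then (1 : ℝ) else 0) - 1) = (-1 : ℝ) ^ (S \ X).card := by
  have h : ∀ i ∈ S, (2 * (if i ∈ X then (1 : ℝ) else 0) - 1)
      = (if i ∈ X then (1 : ℝ) else -1) := by
    intro i _
    split <;> norm_num
  rw [Finset.prod_congr rfl h, Finset.prod_ite, Finset.prod_const, Finset.prod_const,
    one_pow, one_mul]
  congr 1
  rw [Finset.sdiff_eq_filter]

lemma sum_eq {n : ℕ} (f : Finset (Fin n) → ℝ) (S : Finset (Fin n)) :
    ∑ T ∈ (univ \ S).powerset, deltaD S f T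
      = ∑ X : Finset (Fin n), f X * (-1 : ℝ) ^ (S \ X).card := by
  unfold deltaD
  rw [Finset.sum_sigma']
  refine Finset.sum_nbij' (fun p => p.1 ∪ p.2) (fun X => ⟨X \ S, X ∩ S⟩) ?_ ?_ ?_ ?_ ?_
  · intro p hp
    exact Finset.mem_univ _
  · intro X _
    simp only [Finset.mem_sigma, Finset.mem_powerset]
    constructor
    · intro i hi
      simp only [Finset.mem_sdiff, Finset.mem_univ, true_and] at *
      exact hi.2
    · exact Finset.inter_subset_right
  · intro p hp
    simp only [Finset.mem_sigma, Finset.mem_powerset] at hp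
    obtain ⟨h1, h2⟩ := hp
    have hT : p.1 ∩ S = ∅ := by
      rw [Finset.eq_empty_iff_forall_notMem]
      intro i hi
      rw [Finset.mem_inter] at hi
      have := h1 hi.1
      simp [Finset.mem_sdiff] at this
      exact this hi.2
    have e1 : (p.1 ∪ p.2) \ S = p.1 := by
      rw [Finset.union_sdiff_distrib, Finset.sdiff_eq_self_iff_disjoint.2
        (Finset.disjoint_iff_inter_eq_empty.2 hT),
        Finset.sdiff_eq_empty_iff_subset.2 h2, Finset.union_empty]
    have e2 : (p.1 ∪ p.2) ∩ S = p.2 := by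
      rw [Finset.union_inter_distrib_right, hT, Finset.empty_union,
        Finset.inter_eq_left.2 h2]
    exact Sigma.ext e1 (heq_of_eq e2)
  · intro X _
    simp [Finset.sdiff_union_inter]
  · intro p hp
    simp only [Finset.mem_sigma, Finset.mem_powerset] at hp
    obtain ⟨h1, h2⟩ := hp
    have hT : p.1 ∩ S = ∅ := by
      rw [Finset.eq_empty_iff_forall_notMem]
      intro i hi
      rw [Finset.mem_inter] at hi
      have := h1 hi.1
      simp [Finset.mem_sdiff] at this
      exact this hi.2
    have e2 : (p.1 ∪ p.2) ∩ S = p.2 := by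
      rw [Finset.union_inter_distrib_right, hT, Finset.empty_union,
        Finset.inter_eq_left.2 h2]
    have hsd : S \ (p.1 ∪ p.2) = S \ p.2 := by
      rw [Finset.sdiff_eq_sdiff_iff_inter_eq_inter, Finset.inter_comm, e2]
      exact (Finset.inter_eq_right.2 h2).symm
    rw [hsd, Finset.card_sdiff_of_subset h2]
    ring

/-- `I_B(f,S) = 2^{|S|} ⟨f, v_S⟩`, where `v_S(x) = Π_{i∈S}(2x_i − 1)` and
`⟨f,g⟩ = 2^{-n} Σ_{x∈{0,1}^n} f(x)g(x)`. -/
theorem banzhafInteraction_eq_inner (n : ℕ) (f : Finset (Fin n) → ℝ) (S : Finset (Fin n)) :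
    banzhafInteraction f S
      = 2 ^ S.card * ((1 / 2 ^ n) * ∑ X : Finset (Fin n),
          f X * ∏ i ∈ S, (2 * (if i ∈ X then (1 : ℝ) else 0) - 1)) := by
  have hs : S.card ≤ n := by
    simpa using Finset.card_le_card (Finset.subset_univ S)
  unfold banzhafInteraction
  rw [sum_eq]
  have h2n : (2 : ℝ) ^ (n - S.card) * 2 ^ S.card = 2 ^ n := by
    rw [← pow_add, Nat.sub_add_cancel hs]
  have hcoef : (1 : ℝ) / 2 ^ (n - S.card) = 2 ^ S.card * (1 / 2 ^ n) := by
    field_simp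
    linarith [h2n]
  rw [hcoef, mul_assoc]
  congr 2
  exact Finset.sum_congr rfl fun X _ => by rw [prod_sign]
end

section
/- For every pseudo-Boolean function f: {0,1}^n → ℝ and every S ⊆ N, the number I_B(f,S) equals the coefficient of u_S (the leading coefficient) in the multilinear expansion of the orthogonal projection f_S of f onto the subspace V_S = span{u_T : T ⊆ S}, where projection is with respect to the inner product ⟨f,g⟩ = 2^{-n} Σ_{x∈{0,1}^n} f(x)g(x). -/
open Finset

/-- The unanimity function `u_T(x) = Π_{i∈T} x_i` on `{0,1}^n`. -/
def unanimity {n : ℕ} (T X : Finset (Fin n)) : ℝ :=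
  ∏ i ∈ T, (if i ∈ X then (1 : ℝ) else 0)

lemma unanimity_eq {n : ℕ} (T X : Finset (Fin n)) :
    unanimity T X = if T ⊆ X then 1 else 0 := by
  unfold unanimity
  by_cases h : T ⊆ X
  · rw [if_pos h]
    exact Finset.prod_eq_one (fun i hi => by simp [h hi])
  · rw [if_neg h]
    obtain ⟨i, hi, hix⟩ := Finset.not_subset.mp h
    exact Finset.prod_eq_zero hi (by simp [hix])

/-- splitting a sum over the powerset of a disjoint union into a double sum -/
lemma sum_powerset_split {n : ℕ} (U V : Finset (Fin n)) (h : Disjoint U V)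
    (F : Finset (Fin n) → ℝ) :
    ∑ A ∈ (U ∪ V).powerset, F A = ∑ P ∈ U.powerset, ∑ Q ∈ V.powerset, F (P ∪ Q) := by
  rw [← Finset.sum_product']
  refine (Finset.sum_nbij' (fun p => p.1 ∪ p.2) (fun A => (A ∩ U, A ∩ V)) ?_ ?_ ?_ ?_ ?_).symm
  · intro p hp
    simp only [Finset.mem_product, Finset.mem_powerset] at hp
    exact Finset.mem_powerset.mpr (Finset.union_subset_union hp.1 hp.2)
  · intro A hA
    simp only [Finset.mem_powerset] at hA
    simp [Finset.mem_product, Finset.inter_subset_right]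
  · intro p hp
    simp only [Finset.mem_product, Finset.mem_powerset] at hp
    obtain ⟨h1, h2⟩ := hp
    have e1 : (p.1 ∪ p.2) ∩ U = p.1 := by
      ext i
      simp only [Finset.mem_inter, Finset.mem_union]
      constructor
      · rintro ⟨hi | hi, hiU⟩
        · exact hi
        · exact absurd hiU (Finset.disjoint_left.mp h.symm (h2 hi))
      · intro hi; exact ⟨Or.inl hi, h1 hi⟩
    have e2 : (p.1 ∪ p.2) ∩ V = p.2 := by
      ext i
      simp only [Finset.mem_inter, Finset.mem_union]
      constructor
      · rintro ⟨hi | hi, hiV⟩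
        · exact absurd hiV (Finset.disjoint_left.mp h (h1 hi))
        · exact hi
      · intro hi; exact ⟨Or.inr hi, h2 hi⟩
    exact Prod.ext e1 e2
  · intro A hA
    simp only [Finset.mem_powerset] at hA
    show (A ∩ U) ∪ (A ∩ V) = A
    rw [← Finset.inter_union_distrib_left, Finset.inter_eq_left.mpr hA]
  · intro p hp
    rfl

lemma sum_split {n : ℕ} (S : Finset (Fin n)) (F : Finset (Fin n) → ℝ) :
    ∑ X : Finset (Fin n), F X = ∑ P ∈ S.powerset, ∑ Q ∈ Sᶜ.powerset, F (P ∪ Q) := by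
  rw [← sum_powerset_split S Sᶜ disjoint_compl_right F, Finset.union_compl,
    Finset.powerset_univ]

lemma alt_sum {n : ℕ} (M : Finset (Fin n)) :
    ∑ Q ∈ M.powerset, (-1 : ℝ) ^ (M.card - Q.card) = if M = ∅ then 1 else 0 := by
  have h := Finset.prod_add (fun _ : Fin n => (1 : ℝ)) (fun _ => (-1 : ℝ)) M
  simp only [Finset.prod_const, one_pow, one_mul] at h
  have h0 : ((1 : ℝ) + -1) = 0 := by norm_num
  rw [h0] at h
  have h2 : ∑ Q ∈ M.powerset, (-1 : ℝ) ^ (M.card - Q.card)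
      = ∑ Q ∈ M.powerset, (-1 : ℝ) ^ ((M \ Q).card) :=
    Finset.sum_congr rfl (fun Q hQ => by rw [Finset.card_sdiff_of_subset (Finset.mem_powerset.mp hQ)])
  rw [h2, ← h]
  by_cases hM : M = ∅
  · simp [hM]
  · rw [if_neg hM, zero_pow (fun hc => hM (Finset.card_eq_zero.mp hc))]

lemma alt_sum2 {n : ℕ} (M : Finset (Fin n)) :
    ∑ Q ∈ M.powerset, (-1 : ℝ) ^ (M.card - Q.card) * 2 ^ Q.card = 1 := by
  have h := Finset.prod_add (fun _ : Fin n => (2 : ℝ)) (fun _ => (-1 : ℝ)) M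
  simp only [Finset.prod_const] at h
  have h1 : ((2 : ℝ) + -1) = 1 := by norm_num
  rw [h1, one_pow] at h
  have hc : ∑ Q ∈ M.powerset, (-1 : ℝ) ^ (M.card - Q.card) * 2 ^ Q.card
      = ∑ Q ∈ M.powerset, 2 ^ Q.card * (-1 : ℝ) ^ ((M \ Q).card) :=
    Finset.sum_congr rfl (fun Q hQ => by
      rw [Finset.card_sdiff_of_subset (Finset.mem_powerset.mp hQ), mul_comm])
  rw [hc]
  exact h.symm

/-- the sign weight -/
noncomputable def wS {n : ℕ} (S X : Finset (Fin n)) : ℝ :=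
  (-1 : ℝ) ^ (S.card - (X ∩ S).card)

lemma lemA {n : ℕ} (f : Finset (Fin n) → ℝ) (S : Finset (Fin n)) :
    banzhafInteraction f S = (1 / 2 ^ (n - S.card)) * ∑ X : Finset (Fin n), wS S X * f X := by
  unfold banzhafInteraction deltaD
  congr 1
  rw [sum_split S (fun X => wS S X * f X)]
  rw [Finset.sum_comm]
  have hc : (univ \ S : Finset (Fin n)) = Sᶜ := by
    ext i; simp
  rw [hc]
  refine Finset.sum_congr rfl ?_
  intro P hP
  refine Finset.sum_congr rfl ?_
  intro Q hQ
  simp only [Finset.mem_powerset] at hP hQ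
  have e1 : (P ∪ Q) ∩ S = P := by
    ext i
    simp only [Finset.mem_inter, Finset.mem_union]
    constructor
    · rintro ⟨hi | hi, hiS⟩
      · exact hi
      · exact absurd hiS (by simpa using hQ hi)
    · intro hi; exact ⟨Or.inl hi, hP hi⟩
  rw [Finset.union_comm Q P]
  unfold wS
  rw [e1]

lemma lemD {n : ℕ} (S X : Finset (Fin n)) :
    wS S X = ∑ T ∈ S.powerset, (-1 : ℝ) ^ (S.card - T.card) * 2 ^ T.card * unanimity T X := by
  have hfil : S.powerset.filter (fun T => T ⊆ X) = (X ∩ S).powerset := by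
    ext T
    simp only [Finset.mem_filter, Finset.mem_powerset, Finset.subset_inter_iff]
    tauto
  symm
  calc ∑ T ∈ S.powerset, (-1 : ℝ) ^ (S.card - T.card) * 2 ^ T.card * unanimity T X
      = ∑ T ∈ S.powerset.filter (fun T => T ⊆ X),
          (-1 : ℝ) ^ (S.card - T.card) * 2 ^ T.card := by
        rw [Finset.sum_filter]
        refine Finset.sum_congr rfl ?_
        intro T hT
        rw [unanimity_eq]
        by_cases h : T ⊆ X <;> simp [h]
    _ = ∑ T ∈ (X ∩ S).powerset, (-1 : ℝ) ^ (S.card - (X ∩ S).card) *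
          ((-1 : ℝ) ^ ((X ∩ S).card - T.card) * 2 ^ T.card) := by
        rw [hfil]
        refine Finset.sum_congr rfl ?_
        intro T hT
        rw [← mul_assoc, ← pow_add]
        congr 2
        have h1 : T.card ≤ (X ∩ S).card :=
          Finset.card_le_card (Finset.mem_powerset.mp hT)
        have h2 : (X ∩ S).card ≤ S.card :=
          Finset.card_le_card (Finset.inter_subset_right)
        omega
    _ = wS S X := by
        rw [← Finset.mul_sum, alt_sum2, mul_one]
        rfl

lemma lemE {n : ℕ} (S T : Finset (Fin n)) (hT : T ⊆ S) :
    ∑ X : Finset (Fin n), wS S X * unanimity T X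
      = if T = S then (2 : ℝ) ^ (n - S.card) else 0 := by
  rw [sum_split S (fun X => wS S X * unanimity T X)]
  have key : ∀ P ∈ S.powerset, ∀ Q ∈ Sᶜ.powerset,
      wS S (P ∪ Q) * unanimity T (P ∪ Q)
        = (if T ⊆ P then (-1 : ℝ) ^ (S.card - P.card) else 0) := by
    intro P hP Q hQ
    simp only [Finset.mem_powerset] at hP hQ
    have e1 : (P ∪ Q) ∩ S = P := by
      ext i
      simp only [Finset.mem_inter, Finset.mem_union]
      constructor
      · rintro ⟨hi | hi, hiS⟩
        · exact hi
        · exact absurd hiS (by simpa using hQ hi)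
      · intro hi; exact ⟨Or.inl hi, hP hi⟩
    have e2 : (T ⊆ P ∪ Q) ↔ T ⊆ P := by
      constructor
      · intro h i hi
        rcases Finset.mem_union.mp (h hi) with h' | h'
        · exact h'
        · exact absurd (hT hi) (by simpa using hQ h')
      · intro h; exact h.trans Finset.subset_union_left
    unfold wS
    rw [e1, unanimity_eq]
    by_cases h : T ⊆ P
    · rw [if_pos (e2.mpr h), if_pos h, mul_one]
    · rw [if_neg (fun hh => h (e2.mp hh)), if_neg h, mul_zero]
  calc ∑ P ∈ S.powerset, ∑ Q ∈ Sᶜ.powerset, wS S (P ∪ Q) * unanimity T (P ∪ Q)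
      = ∑ P ∈ S.powerset, ∑ Q ∈ Sᶜ.powerset,
          (if T ⊆ P then (-1 : ℝ) ^ (S.card - P.card) else 0) := by
        exact Finset.sum_congr rfl fun P hP => Finset.sum_congr rfl fun Q hQ => key P hP Q hQ
    _ = ∑ P ∈ S.powerset, (2 : ℝ) ^ (n - S.card) *
          (if T ⊆ P then (-1 : ℝ) ^ (S.card - P.card) else 0) := by
        refine Finset.sum_congr rfl fun P hP => ?_
        rw [Finset.sum_const, nsmul_eq_mul, Finset.card_powerset, Finset.card_compl,
          Fintype.card_fin]
        push_cast
        ring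
    _ = (2 : ℝ) ^ (n - S.card) *
          ∑ P ∈ S.powerset, (if T ⊆ P then (-1 : ℝ) ^ (S.card - P.card) else 0) := by
        rw [Finset.mul_sum]
    _ = if T = S then (2 : ℝ) ^ (n - S.card) else 0 := by
        have hstep : ∑ P ∈ S.powerset, (if T ⊆ P then (-1 : ℝ) ^ (S.card - P.card) else 0)
            = ∑ W ∈ (S \ T).powerset, (-1 : ℝ) ^ ((S \ T).card - W.card) := by
          rw [← Finset.sum_filter]
          refine Finset.sum_nbij' (fun P => P \ T) (fun W => T ∪ W) ?_ ?_ ?_ ?_ ?_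
          · intro P hP
            simp only [Finset.mem_filter, Finset.mem_powerset] at hP
            exact Finset.mem_powerset.mpr (Finset.sdiff_subset_sdiff hP.1 (le_refl T))
          · intro W hW
            simp only [Finset.mem_powerset] at hW
            refine Finset.mem_filter.mpr ⟨Finset.mem_powerset.mpr ?_, Finset.subset_union_left⟩
            exact Finset.union_subset hT (hW.trans Finset.sdiff_subset)
          · intro P hP
            simp only [Finset.mem_filter, Finset.mem_powerset] at hP
            exact Finset.union_sdiff_of_subset hP.2
          · intro W hW
            simp only [Finset.mem_powerset] at hW
            exact Finset.union_sdiff_cancel_left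
              (Finset.disjoint_sdiff.mono_right hW)
          · intro P hP
            simp only [Finset.mem_filter, Finset.mem_powerset] at hP
            show (-1 : ℝ) ^ (S.card - P.card) = (-1 : ℝ) ^ ((S \ T).card - (P \ T).card)
            congr 1
            rw [Finset.card_sdiff_of_subset hT, Finset.card_sdiff_of_subset hP.2]
            have := Finset.card_le_card hP.1
            have := Finset.card_le_card hP.2
            omega
        rw [hstep, alt_sum]
        have hiff : (S \ T = ∅) ↔ (T = S) := by
          rw [Finset.sdiff_eq_empty_iff_subset]
          exact ⟨fun h => Finset.Subset.antisymm hT h, fun h => h ▸ Finset.Subset.refl S⟩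
        by_cases h : T = S
        · rw [if_pos (hiff.mpr h), if_pos h, mul_one]
        · rw [if_neg (fun hh => h (hiff.mp hh)), if_neg h, mul_zero]

/-- if `Σ_{T⊆S} c(T) u_T` is the best least-squares approximation of `f`
among all multilinear polynomials depending only on the variables in `S`, then the
leading coefficient `c(S)` equals the Banzhaf interaction index `I_B(f,S)`. -/
theorem leading_coefficient_of_best_S_approx (n : ℕ) (f : Finset (Fin n) → ℝ)
    (S : Finset (Fin n)) (c : Finset (Fin n) → ℝ)
    (hmin : ∀ d : Finset (Fin n) → ℝ,
        ∑ X : Finset (Fin n), (f X - ∑ T ∈ S.powerset, c T * unanimity T X) ^ 2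
          ≤ ∑ X : Finset (Fin n), (f X - ∑ T ∈ S.powerset, d T * unanimity T X) ^ 2) :
    c S = banzhafInteraction f S := by
  classical
  set g : Finset (Fin n) → ℝ := fun X => ∑ T ∈ S.powerset, c T * unanimity T X with hg
  have hgX : ∀ X, g X = ∑ T ∈ S.powerset, c T * unanimity T X := fun X => rfl
  -- orthogonality
  have orth : ∀ T ∈ S.powerset,
      ∑ X : Finset (Fin n), (f X - g X) * unanimity T X = 0 := by
    intro T hT
    set L : ℝ := ∑ X : Finset (Fin n), (f X - g X) * unanimity T X with hL
    set M : ℝ := ∑ X : Finset (Fin n), unanimity T X * unanimity T X with hM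
    have hMge : (1 : ℝ) ≤ M := by
      have h1 : unanimity T T * unanimity T T = 1 := by
        rw [unanimity_eq, if_pos (Finset.Subset.refl T)]; norm_num
      have h2 : unanimity T T * unanimity T T ≤ M :=
        Finset.single_le_sum
          (f := fun X : Finset (Fin n) => unanimity T X * unanimity T X)
          (fun X _ => mul_self_nonneg _) (Finset.mem_univ T)
      rw [h1] at h2
      exact h2
    have hMpos : (0 : ℝ) < M := lt_of_lt_of_le one_pos hMge
    have hMne : M ≠ 0 := ne_of_gt hMpos
    have key := hmin (fun R => c R + if R = T then L / M else 0)
    have hmodel : ∀ X : Finset (Fin n),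
        ∑ R ∈ S.powerset, (c R + if R = T then L / M else 0) * unanimity R X
          = g X + (L / M) * unanimity T X := by
      intro X
      simp only [add_mul]
      rw [Finset.sum_add_distrib, ← hgX]
      congr 1
      have : ∀ R ∈ S.powerset,
          (if R = T then L / M else 0) * unanimity R X
            = (if R = T then (L / M) * unanimity R X else 0) := by
        intro R _
        by_cases h : R = T <;> simp [h]
      rw [Finset.sum_congr rfl this, Finset.sum_ite_eq' S.powerset T
        (fun R => (L / M) * unanimity R X), if_pos hT]
    have hexp : ∑ X : Finset (Fin n), (f X - (g X + (L / M) * unanimity T X)) ^ 2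
        = (∑ X : Finset (Fin n), (f X - g X) ^ 2)
          - 2 * (L / M) * L + (L / M) ^ 2 * M := by
      have hterm : ∀ X : Finset (Fin n),
          (f X - (g X + (L / M) * unanimity T X)) ^ 2
            = (f X - g X) ^ 2 - 2 * (L / M) * ((f X - g X) * unanimity T X)
              + (L / M) ^ 2 * (unanimity T X * unanimity T X) := by
        intro X; ring
      rw [Finset.sum_congr rfl (fun X _ => hterm X), Finset.sum_add_distrib,
        Finset.sum_sub_distrib, ← Finset.mul_sum, ← Finset.mul_sum, ← hL, ← hM]
    have key2 : ∑ X : Finset (Fin n), (f X - g X) ^ 2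
        ≤ (∑ X : Finset (Fin n), (f X - g X) ^ 2)
          - 2 * (L / M) * L + (L / M) ^ 2 * M := by
      calc ∑ X : Finset (Fin n), (f X - g X) ^ 2
          = ∑ X : Finset (Fin n), (f X - ∑ T ∈ S.powerset, c T * unanimity T X) ^ 2 := by
            exact Finset.sum_congr rfl fun X _ => by rw [← hgX]
        _ ≤ ∑ X : Finset (Fin n),
              (f X - ∑ R ∈ S.powerset,
                (c R + if R = T then L / M else 0) * unanimity R X) ^ 2 := key
        _ = ∑ X : Finset (Fin n), (f X - (g X + (L / M) * unanimity T X)) ^ 2 := by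
            exact Finset.sum_congr rfl fun X _ => by rw [hmodel X]
        _ = _ := hexp
    have hLsq : L ^ 2 ≤ 0 := by
      have h1 : 2 * (L / M) * L ≤ (L / M) ^ 2 * M := by linarith
      have h2 : 2 * (L / M) * L = 2 * (L ^ 2 / M) := by field_simp
      have h3 : (L / M) ^ 2 * M = L ^ 2 / M := by field_simp
      rw [h2, h3] at h1
      have h4 : L ^ 2 / M ≤ 0 := by linarith
      have h6 : L ^ 2 = L ^ 2 / M * M := by field_simp
      have h7 : L ^ 2 / M * M ≤ 0 * M := mul_le_mul_of_nonneg_right h4 (le_of_lt hMpos)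
      rw [zero_mul] at h7
      rw [h6]; exact h7
    have hsq : L ^ 2 = 0 := le_antisymm hLsq (sq_nonneg L)
    exact (pow_eq_zero_iff (by norm_num : (2:ℕ) ≠ 0)).mp hsq
  -- main computation
  have e1 : ∑ X : Finset (Fin n), wS S X * f X = ∑ X : Finset (Fin n), wS S X * g X := by
    have hz : ∑ X : Finset (Fin n), wS S X * (f X - g X) = 0 := by
      calc ∑ X : Finset (Fin n), wS S X * (f X - g X)
          = ∑ X : Finset (Fin n), ∑ T ∈ S.powerset,
              (-1 : ℝ) ^ (S.card - T.card) * 2 ^ T.card * unanimity T X * (f X - g X) := by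
            refine Finset.sum_congr rfl fun X _ => ?_
            rw [lemD S X, Finset.sum_mul]
        _ = ∑ T ∈ S.powerset, (-1 : ℝ) ^ (S.card - T.card) * 2 ^ T.card *
              ∑ X : Finset (Fin n), (f X - g X) * unanimity T X := by
            rw [Finset.sum_comm]
            refine Finset.sum_congr rfl fun T _ => ?_
            rw [Finset.mul_sum]
            exact Finset.sum_congr rfl fun X _ => by ring
        _ = 0 := by
            refine Finset.sum_eq_zero fun T hT => ?_
            rw [orth T hT, mul_zero]
    have h2 : ∑ X : Finset (Fin n), (wS S X * f X - wS S X * g X) = 0 := by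
      rw [← hz]
      exact Finset.sum_congr rfl fun X _ => by ring
    rw [Finset.sum_sub_distrib] at h2
    linarith
  have e2 : ∑ X : Finset (Fin n), wS S X * g X = 2 ^ (n - S.card) * c S := by
    calc ∑ X : Finset (Fin n), wS S X * g X
        = ∑ X : Finset (Fin n), ∑ T ∈ S.powerset, c T * (wS S X * unanimity T X) := by
          refine Finset.sum_congr rfl fun X _ => ?_
          rw [hgX X, Finset.mul_sum]
          exact Finset.sum_congr rfl fun T _ => by ring
      _ = ∑ T ∈ S.powerset, c T * ∑ X : Finset (Fin n), wS S X * unanimity T X := by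
          rw [Finset.sum_comm]
          exact Finset.sum_congr rfl fun T _ => by rw [Finset.mul_sum]
      _ = ∑ T ∈ S.powerset, c T * (if T = S then (2 : ℝ) ^ (n - S.card) else 0) := by
          exact Finset.sum_congr rfl fun T hT => by
            rw [lemE S T (Finset.mem_powerset.mp hT)]
      _ = 2 ^ (n - S.card) * c S := by
          have : ∀ T ∈ S.powerset,
              c T * (if T = S then (2 : ℝ) ^ (n - S.card) else 0)
                = (if T = S then c T * 2 ^ (n - S.card) else 0) := by
            intro T _
            by_cases h : T = S <;> simp [h]
          rw [Finset.sum_congr rfl this, Finset.sum_ite_eq' S.powerset S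
            (fun T => c T * 2 ^ (n - S.card)), if_pos (Finset.mem_powerset_self S)]
          ring
  rw [lemA, e1, e2]
  have hpow : (2 : ℝ) ^ (n - S.card) ≠ 0 := by positivity
  field_simp
end

section
/- For every pseudo-Boolean function f: {0,1}^n → ℝ and every S ⊆ N, Φ_B(f,S) = Σ_{T⊆S, |T| odd} (1/2)^{|T|−1} I_B(f,T). -/
open Finset

/-- The Banzhaf influence index. -/
noncomputable def banzhafInfluence {n : ℕ} (f : Finset (Fin n) → ℝ) (S : Finset (Fin n)) : ℝ :=
  (1 / 2 ^ (n - S.card)) * ∑ T ∈ (univ \ S).powerset, (f (T ∪ S) - f T)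

/-- Sum over the powerset of a disjoint union factors into a double sum. -/
lemma sum_powerset_union {n : ℕ} (A : Finset (Fin n)) :
    ∀ (B : Finset (Fin n)), Disjoint A B → ∀ (g : Finset (Fin n) → ℝ),
    ∑ R ∈ (A ∪ B).powerset, g R = ∑ T ∈ A.powerset, ∑ K ∈ B.powerset, g (T ∪ K) := by
  intro B
  induction B using Finset.induction_on with
  | empty => intro _ g; simp
  | @insert b B hb ih =>
      intro hd g
      have hdAB : Disjoint A B := hd.mono_right (subset_insert _ _)
      have hbA : b ∉ A := fun hbA => (Finset.disjoint_left.1 hd) hbA (mem_insert_self _ _)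
      have hbAB : b ∉ A ∪ B := by simp [hbA, hb]
      have h1 : A ∪ insert b B = insert b (A ∪ B) := by
        rw [Finset.union_insert]
      rw [h1, Finset.sum_powerset_insert hbAB g, ih hdAB g, ih hdAB (fun t => g (insert b t))]
      rw [← Finset.sum_add_distrib]
      refine Finset.sum_congr rfl fun T _ => ?_
      rw [Finset.sum_powerset_insert hb (fun K => g (T ∪ K))]
      simp only [Finset.union_insert]

/-- `∑_{L ⊆ S} (-1)^{|L \ M|} = 2^{|S|}` if `S ⊆ M`, else `0`. -/
lemma signsum {n : ℕ} (S M : Finset (Fin n)) :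
    ∑ L ∈ S.powerset, (-1 : ℝ) ^ (L \ M).card
      = if S ⊆ M then (2 : ℝ) ^ S.card else 0 := by
  have key : ∏ i ∈ S, ((if i ∈ M then (1 : ℝ) else -1) + 1)
      = ∑ L ∈ S.powerset, (-1 : ℝ) ^ (L \ M).card := by
    rw [Finset.prod_add]
    refine Finset.sum_congr rfl fun L _ => ?_
    rw [Finset.prod_const_one, mul_one]
    nth_rewrite 1 [← Finset.sdiff_union_inter L M]
    rw [Finset.prod_union (Finset.disjoint_sdiff_inter L M)]
    have h1 : ∏ i ∈ L \ M, (if i ∈ M then (1 : ℝ) else -1) = (-1 : ℝ) ^ (L \ M).card := by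
      rw [Finset.prod_congr rfl (fun i hi => by
        rw [if_neg (Finset.mem_sdiff.1 hi).2]), Finset.prod_const]
    have h2 : ∏ i ∈ L ∩ M, (if i ∈ M then (1 : ℝ) else -1) = 1 := by
      rw [Finset.prod_congr rfl (fun i hi => by
        rw [if_pos (Finset.mem_inter.1 hi).2]), Finset.prod_const_one]
    rw [h1, h2, mul_one]
  rw [← key]
  by_cases hSM : S ⊆ M
  · rw [if_pos hSM]
    rw [Finset.prod_congr rfl (fun i hi => by rw [if_pos (hSM hi)]), Finset.prod_const]
    norm_num
  · rw [if_neg hSM]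
    obtain ⟨i, hiS, hiM⟩ := Finset.not_subset.1 hSM
    exact Finset.prod_eq_zero hiS (by rw [if_neg hiM]; ring)

/-- Per-term odd-filter trick. -/
lemma ite_odd_eq {n : ℕ} (L M : Finset (Fin n)) :
    (if Odd L.card then (-1 : ℝ) ^ (L \ M).card else 0)
      = ((-1 : ℝ) ^ (L \ M).card - (-1 : ℝ) ^ (L ∩ M).card) / 2 := by
  have h1 : (L ∩ M).card + (L \ M).card = L.card := Finset.card_inter_add_card_sdiff L M
  have h2 : (-1 : ℝ) ^ (L ∩ M).card * (-1 : ℝ) ^ (L \ M).card = (-1 : ℝ) ^ L.card := by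
    rw [← pow_add, h1]
  rcases Nat.even_or_odd L.card with h5 | h5
  · rw [if_neg (by exact (Nat.not_odd_iff_even).2 h5)]
    rw [h5.neg_one_pow] at h2
    rcases neg_one_pow_eq_or ℝ (L ∩ M).card with h3 | h3 <;>
      rcases neg_one_pow_eq_or ℝ (L \ M).card with h4 | h4 <;>
      rw [h3, h4] <;> rw [h3, h4] at h2 <;> norm_num at *
  · rw [if_pos h5]
    rw [h5.neg_one_pow] at h2
    rcases neg_one_pow_eq_or ℝ (L ∩ M).card with h3 | h3 <;>
      rcases neg_one_pow_eq_or ℝ (L \ M).card with h4 | h4 <;>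
      rw [h3, h4] <;> rw [h3, h4] at h2 <;> norm_num at *

/-- Key coefficient computation. -/
lemma coeffC {n : ℕ} (S M : Finset (Fin n)) (hM : M ⊆ S) :
    ∑ L ∈ S.powerset.filter (fun L => Odd L.card), (-1 : ℝ) ^ (L \ M).card
      = ((if M = S then (2 : ℝ) ^ S.card else 0)
          - (if M = ∅ then (2 : ℝ) ^ S.card else 0)) / 2 := by
  rw [Finset.sum_filter]
  rw [Finset.sum_congr rfl (fun L _ => ite_odd_eq L M)]
  rw [← Finset.sum_div, Finset.sum_sub_distrib]
  have hP2 : ∀ L : Finset (Fin n), (-1 : ℝ) ^ (L ∩ M).card = (-1 : ℝ) ^ (L \ (univ \ M)).card := by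
    intro L
    congr 1
    congr 1
    ext x
    by_cases hx : x ∈ M <;> simp [Finset.mem_sdiff, Finset.mem_inter, hx]
  rw [Finset.sum_congr rfl (fun L _ => hP2 L), signsum, signsum]
  have e1 : (S ⊆ M) ↔ (M = S) :=
    ⟨fun h => le_antisymm hM h, fun h => h ▸ le_refl _⟩
  have e2 : (S ⊆ univ \ M) ↔ (M = ∅) := by
    constructor
    · intro h
      by_contra hne
      obtain ⟨x, hx⟩ := Finset.nonempty_iff_ne_empty.2 hne
      exact (Finset.mem_sdiff.1 (h (hM hx))).2 hx
    · intro h; subst h; simp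
  have g1 : (if S ⊆ M then (2 : ℝ) ^ S.card else 0) = (if M = S then (2 : ℝ) ^ S.card else 0) :=
    if_congr e1 rfl rfl
  have g2 : (if S ⊆ univ \ M then (2 : ℝ) ^ S.card else 0)
      = (if M = ∅ then (2 : ℝ) ^ S.card else 0) := if_congr e2 rfl rfl
  rw [g1, g2]

/-- The per-`T` main identity. -/
lemma star {n : ℕ} (f : Finset (Fin n) → ℝ) (S T : Finset (Fin n)) :
    ∑ L ∈ S.powerset.filter (fun L => Odd L.card),
        ∑ K ∈ (S \ L).powerset, deltaD L f (T ∪ K)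
      = (2 : ℝ) ^ S.card * (f (T ∪ S) - f T) / 2 := by
  have step1 : ∀ L ∈ S.powerset.filter (fun L => Odd L.card),
      ∑ K ∈ (S \ L).powerset, deltaD L f (T ∪ K)
        = ∑ M ∈ S.powerset, (-1 : ℝ) ^ (L \ M).card * f (T ∪ M) := by
    intro L hL
    have hLS : L ⊆ S := Finset.mem_powerset.1 (Finset.mem_filter.1 hL).1
    have hdisj : Disjoint (S \ L) L := Finset.sdiff_disjoint
    have hunion : (S \ L) ∪ L = S := Finset.sdiff_union_of_subset hLS
    have := sum_powerset_union (S \ L) L hdisj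
      (fun M => (-1 : ℝ) ^ (L \ M).card * f (T ∪ M))
    rw [hunion] at this
    rw [this]
    refine Finset.sum_congr rfl fun K hK => ?_
    have hKL : Disjoint K L := Finset.disjoint_of_subset_left (Finset.mem_powerset.1 hK)
      Finset.sdiff_disjoint
    unfold deltaD
    refine Finset.sum_congr rfl fun A hA => ?_
    have hAL : A ⊆ L := Finset.mem_powerset.1 hA
    have hscard : (L \ (K ∪ A)).card = L.card - A.card := by
      have : L \ (K ∪ A) = L \ A := by
        ext x
        simp only [Finset.mem_sdiff, Finset.mem_union]
        constructor
        · rintro ⟨hx, h2⟩; exact ⟨hx, fun h => h2 (Or.inr h)⟩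
        · rintro ⟨hx, h2⟩
          exact ⟨hx, fun h => h.elim (fun hk => (Finset.disjoint_right.1 hKL) hx hk) h2⟩
      rw [this, Finset.card_sdiff_of_subset hAL]
    rw [hscard, Finset.union_assoc]
  rw [Finset.sum_congr rfl step1, Finset.sum_comm]
  have step2 : ∀ M ∈ S.powerset,
      ∑ L ∈ S.powerset.filter (fun L => Odd L.card), (-1 : ℝ) ^ (L \ M).card * f (T ∪ M)
        = (((if M = S then (2 : ℝ) ^ S.card else 0)
            - (if M = ∅ then (2 : ℝ) ^ S.card else 0)) / 2) * f (T ∪ M) := by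
    intro M hM
    rw [← Finset.sum_mul, coeffC S M (Finset.mem_powerset.1 hM)]
  rw [Finset.sum_congr rfl step2]
  simp only [sub_div, sub_mul, ite_div, zero_div, ite_mul, zero_mul]
  rw [Finset.sum_sub_distrib, Finset.sum_ite_eq' S.powerset S, Finset.sum_ite_eq' S.powerset ∅]
  simp only [Finset.mem_powerset, Finset.Subset.refl, Finset.empty_subset, if_pos,
    Finset.union_empty]
  ring

/-- `Φ_B(f,S) = Σ_{T⊆S, |T| odd} (1/2)^{|T|−1} I_B(f,T)`. -/
theorem banzhafInfluence_eq_sum_interaction (n : ℕ) (f : Finset (Fin n) → ℝ)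
    (S : Finset (Fin n)) :
    banzhafInfluence f S
      = ∑ T ∈ S.powerset.filter (fun T => Odd T.card),
          (1 / 2 : ℝ) ^ (T.card - 1) * banzhafInteraction f T := by
  classical
  by_cases hS : S = ∅
  · subst hS
    simp [banzhafInfluence, Finset.powerset_empty, Finset.filter_singleton]
  · have hs1 : 1 ≤ S.card := Finset.card_pos.2 (Finset.nonempty_iff_ne_empty.2 hS)
    have hsn : S.card ≤ n := by
      have := Finset.card_le_univ S
      simpa using this
    have hRHS : ∀ L ∈ S.powerset.filter (fun T => Odd T.card),
        (1 / 2 : ℝ) ^ (L.card - 1) * banzhafInteraction f L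
          = (1 / 2 : ℝ) ^ (n - 1)
              * ∑ T ∈ (univ \ S).powerset, ∑ K ∈ (S \ L).powerset, deltaD L f (T ∪ K) := by
      intro L hL
      obtain ⟨hL1, hLodd⟩ := Finset.mem_filter.1 hL
      have hLS : L ⊆ S := Finset.mem_powerset.1 hL1
      have hL1' : 1 ≤ L.card := by
        rcases hLodd with ⟨k, hk⟩; omega
      have hLn : L.card ≤ n := le_trans (Finset.card_le_card hLS) hsn
      have hset : (univ \ S) ∪ (S \ L) = univ \ L := by
        ext x
        simp only [Finset.mem_union, Finset.mem_sdiff, Finset.mem_univ, true_and]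
        constructor
        · rintro (h | ⟨_, h⟩) <;> [exact fun hx => h (hLS hx); exact h]
        · intro h
          by_cases hxS : x ∈ S
          · exact Or.inr ⟨hxS, h⟩
          · exact Or.inl hxS
      have hdisj : Disjoint (univ \ S) (S \ L) := by
        rw [Finset.disjoint_left]
        intro a ha ha'
        exact (Finset.mem_sdiff.1 ha).2 (Finset.mem_sdiff.1 ha').1
      rw [banzhafInteraction, ← hset, sum_powerset_union _ _ hdisj, ← mul_assoc]
      congr 1
      have h2 : (1 : ℝ) / 2 ^ (n - L.card) = (1 / 2 : ℝ) ^ (n - L.card) := by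
        rw [div_pow, one_pow]
      rw [h2, ← pow_add]
      congr 1
      omega
    rw [Finset.sum_congr rfl hRHS, ← Finset.mul_sum, Finset.sum_comm]
    rw [Finset.sum_congr rfl (fun T _ => star f S T)]
    have hper : ∀ T : Finset (Fin n),
        (2 : ℝ) ^ S.card * (f (T ∪ S) - f T) / 2
          = ((2 : ℝ) ^ S.card / 2) * (f (T ∪ S) - f T) := fun T => by ring
    rw [Finset.sum_congr rfl (fun T _ => hper T), ← Finset.mul_sum, banzhafInfluence,
      ← mul_assoc]
    congr 1
    have hA : (2 : ℝ) ^ (n - S.card) * 2 ^ S.card = 2 ^ n := by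
      rw [← pow_add]; congr 1; omega
    have hB : (2 : ℝ) ^ (n - 1) * 2 = 2 ^ n := by
      rw [← pow_succ]; congr 1; omega
    have hpos : (0 : ℝ) < 2 ^ (n - S.card) := by positivity
    have hpos2 : (0 : ℝ) < 2 ^ (n - 1) := by positivity
    rw [div_pow, one_pow]
    field_simp
    nlinarith [hA, hB]
end

section
/- For every pseudo-Boolean function f: {0,1}^n → ℝ, every p ∈ (0,1)^n, and every S ⊆ N, the weighted Banzhaf influence index satisfies Φ_{B,p}(f,S) = Σ_{T⊆S} I_{B,p}(f,T) · (Π_{i∈T}(1−p_i) − (−1)^{|T|} Π_{i∈T} p_i), where I_{B,p}(f,T) = ⟨f, v_{T,p}⟩ / Π_{i∈T}√(p_i(1−p_i)). -/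
open Finset

/-- The product probability weight on `2^N`. -/
noncomputable def prodWeight {n : ℕ} (p : Fin n → ℝ) (X : Finset (Fin n)) : ℝ :=
  (∏ i ∈ X, p i) * ∏ i ∈ univ \ X, (1 - p i)

/-- The weighted basis function `v_{T,p}(x) = Π_{i∈T} (x_i − p_i)/√(p_i(1−p_i))`. -/
noncomputable def vWeighted {n : ℕ} (p : Fin n → ℝ) (T X : Finset (Fin n)) : ℝ :=
  ∏ i ∈ T, ((if i ∈ X then (1 : ℝ) else 0) - p i) / Real.sqrt (p i * (1 - p i))

/-- The weighted inner product `⟨f,g⟩ = Σ_x w(x) f(x) g(x)`. -/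
noncomputable def wInner {n : ℕ} (p : Fin n → ℝ) (f g : Finset (Fin n) → ℝ) : ℝ :=
  ∑ X : Finset (Fin n), prodWeight p X * (f X * g X)

/-- The best `S`-approximation `f_{S,p} = Σ_{T⊆S} ⟨f,v_{T,p}⟩ v_{T,p}`. -/
noncomputable def bestApprox {n : ℕ} (p : Fin n → ℝ) (f : Finset (Fin n) → ℝ)
    (S X : Finset (Fin n)) : ℝ :=
  ∑ T ∈ S.powerset, wInner p f (vWeighted p T) * vWeighted p T X

/-- The weighted Banzhaf influence index `Φ_{B,p}(f,S) = f_{S,p}(S) − f_{S,p}(∅)`. -/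
noncomputable def wBanzhafInfluence {n : ℕ} (p : Fin n → ℝ) (f : Finset (Fin n) → ℝ)
    (S : Finset (Fin n)) : ℝ :=
  bestApprox p f S S - bestApprox p f S ∅

/-- The weighted Banzhaf interaction index
`I_{B,p}(f,T) = ⟨f,v_{T,p}⟩ / Π_{i∈T}√(p_i(1−p_i))`. -/
noncomputable def wBanzhafInteraction {n : ℕ} (p : Fin n → ℝ) (f : Finset (Fin n) → ℝ)
    (T : Finset (Fin n)) : ℝ :=
  wInner p f (vWeighted p T) / ∏ i ∈ T, Real.sqrt (p i * (1 - p i))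

/-- `Φ_{B,p}(f,S) = Σ_{T⊆S} I_{B,p}(f,T) (Π_{i∈T}(1−p_i) − (−1)^{|T|} Π_{i∈T} p_i)`. -/
theorem wBanzhafInfluence_eq_sum_interaction (n : ℕ) (p : Fin n → ℝ)
    (hp : ∀ i, p i ∈ Set.Ioo (0 : ℝ) 1) (f : Finset (Fin n) → ℝ) (S : Finset (Fin n)) :
    wBanzhafInfluence p f S
      = ∑ T ∈ S.powerset, wBanzhafInteraction p f T *
          ((∏ i ∈ T, (1 - p i)) - (-1 : ℝ) ^ T.card * ∏ i ∈ T, p i) := by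
  unfold wBanzhafInfluence bestApprox wBanzhafInteraction
  rw [← Finset.sum_sub_distrib]
  refine Finset.sum_congr rfl fun T hT => ?_
  rw [Finset.mem_powerset] at hT
  have hs : ∀ i ∈ T, Real.sqrt (p i * (1 - p i)) ≠ 0 := by
    intro i _
    have h := hp i
    exact ne_of_gt (Real.sqrt_pos.mpr (mul_pos h.1 (by linarith [h.2])))
  have hS : vWeighted p T S = (∏ i ∈ T, (1 - p i)) / ∏ i ∈ T, Real.sqrt (p i * (1 - p i)) := by
    rw [vWeighted, ← Finset.prod_div_distrib]
    exact Finset.prod_congr rfl fun i hi => by rw [if_pos (hT hi)]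
  have hE : vWeighted p T ∅ = ((-1 : ℝ) ^ T.card * ∏ i ∈ T, p i) / ∏ i ∈ T, Real.sqrt (p i * (1 - p i)) := by
    rw [vWeighted, Finset.prod_div_distrib]
    congr 1
    rw [show (∏ x ∈ T, ((if x ∈ (∅ : Finset (Fin n)) then (1:ℝ) else 0) - p x))
        = ∏ x ∈ T, -(p x) from Finset.prod_congr rfl fun i hi => by simp]
    calc ∏ x ∈ T, -(p x) = ∏ x ∈ T, (-1 : ℝ) * p x := by simp [neg_one_mul]
      _ = (-1 : ℝ) ^ T.card * ∏ x ∈ T, p x := by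
          rw [Finset.prod_mul_distrib, Finset.prod_const]
  rw [hS, hE]
  ring
end

section
/- For every pseudo-Boolean function f with Möbius transform a, every p ∈ (0,1)^n, and every S ⊆ N, Φ_{B,p}(f,S) = Σ_{T⊆N, T∩S≠∅} a(T) · Π_{i∈T∖S} p_i. -/
open Finset

/-- The Möbius transform `a(T) = Σ_{R⊆T}(−1)^{|T|−|R|} f(R)`. -/
noncomputable def moebius {n : ℕ} (f : Finset (Fin n) → ℝ) (T : Finset (Fin n)) : ℝ :=
  ∑ R ∈ T.powerset, (-1 : ℝ) ^ (T.card - R.card) * f R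

section Aux
lemma sigma_sq' {n : ℕ} {p : Fin n → ℝ} (hp : ∀ i, p i ∈ Set.Ioo (0 : ℝ) 1) (i : Fin n) :
    Real.sqrt (p i * (1 - p i)) * Real.sqrt (p i * (1 - p i)) = p i * (1 - p i) :=
  Real.mul_self_sqrt (le_of_lt (mul_pos (hp i).1 (by linarith [(hp i).2])))

lemma sigma_ne' {n : ℕ} {p : Fin n → ℝ} (hp : ∀ i, p i ∈ Set.Ioo (0 : ℝ) 1) (i : Fin n) :
    Real.sqrt (p i * (1 - p i)) ≠ 0 :=
  ne_of_gt (Real.sqrt_pos.2 (mul_pos (hp i).1 (by linarith [(hp i).2])))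

lemma neg_one_pow_sum_real' {α : Type*} [DecidableEq α] (x : Finset α) :
    (∑ m ∈ x.powerset, (-1 : ℝ) ^ m.card) = if x = ∅ then 1 else 0 := by
  have h := Finset.sum_powerset_neg_one_pow_card (x := x)
  have h2 : ((∑ m ∈ x.powerset, (-1 : ℤ) ^ m.card : ℤ) : ℝ)
      = ∑ m ∈ x.powerset, (-1 : ℝ) ^ m.card := by push_cast; rfl
  rw [← h2, h]; split <;> norm_num

lemma moebius_inv' {n : ℕ} (f : Finset (Fin n) → ℝ) (X : Finset (Fin n)) :
    ∑ R ∈ X.powerset, moebius f R = f X := by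
  unfold moebius
  rw [Finset.sum_comm' (t' := X.powerset)
    (s' := fun Q => X.powerset.filter (fun R => Q ⊆ R))
    (by
      intro R Q
      simp only [mem_powerset, mem_filter]
      constructor
      · rintro ⟨h1, h2⟩; exact ⟨⟨h1, h2⟩, h2.trans h1⟩
      · rintro ⟨⟨h1, h2⟩, h3⟩; exact ⟨h1, h2⟩)]
  have key : ∀ Q ∈ X.powerset,
      ∑ R ∈ X.powerset.filter (fun R => Q ⊆ R), (-1 : ℝ) ^ (R.card - Q.card) * f Q
        = (if Q = X then 1 else 0) * f Q := by
    intro Q hQ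
    rw [mem_powerset] at hQ
    have hsum : ∑ R ∈ X.powerset.filter (fun R => Q ⊆ R), (-1 : ℝ) ^ (R.card - Q.card)
        = ∑ U ∈ (X \ Q).powerset, (-1 : ℝ) ^ U.card := by
      refine Finset.sum_nbij' (fun R => R \ Q) (fun U => Q ∪ U) ?_ ?_ ?_ ?_ ?_
      · intro R hR
        simp only [mem_filter, mem_powerset] at hR ⊢
        exact sdiff_subset_sdiff hR.1 (le_refl _)
      · intro U hU
        simp only [mem_powerset] at hU
        simp only [mem_filter, mem_powerset]
        exact ⟨union_subset hQ (hU.trans sdiff_subset), subset_union_left⟩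
      · intro R hR
        simp only [mem_filter, mem_powerset] at hR
        show Q ∪ (R \ Q) = R
        rw [union_sdiff_of_subset hR.2]
      · intro U hU
        simp only [mem_powerset] at hU
        show (Q ∪ U) \ Q = U
        rw [union_sdiff_cancel_left (disjoint_sdiff.mono_right hU)]
      · intro R hR
        simp only [mem_filter, mem_powerset] at hR
        rw [card_sdiff_of_subset hR.2]
    rw [← sum_mul, hsum, neg_one_pow_sum_real']
    congr 1
    have heq : X \ Q = ∅ ↔ Q = X := by
      rw [sdiff_eq_empty_iff_subset]
      exact ⟨fun h => subset_antisymm hQ h, fun h => h ▸ le_refl _⟩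
    simp [heq]
  rw [Finset.sum_congr rfl key]
  simp [ite_mul, Finset.sum_ite_eq', Finset.mem_powerset]

lemma ind_eq' {n : ℕ} (p : Fin n → ℝ) (R X : Finset (Fin n)) :
    (if R ⊆ X then (1 : ℝ) else 0) = ∏ i ∈ univ \ X, (if i ∈ R then (0:ℝ) else 1) := by
  by_cases h : R ⊆ X
  · rw [if_pos h]
    exact (Finset.prod_eq_one (fun i hi => by
      rw [if_neg (fun hiR => ((mem_sdiff.1 hi).2 (h hiR)))])).symm
  · rw [if_neg h]
    obtain ⟨i, hiR, hiX⟩ := Finset.not_subset.1 h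
    symm
    apply Finset.prod_eq_zero (mem_sdiff.2 ⟨mem_univ i, hiX⟩)
    exact if_pos hiR

lemma v_eq' {n : ℕ} (p : Fin n → ℝ) (T X : Finset (Fin n)) :
    vWeighted p T X
      = (∏ i ∈ X, (if i ∈ T then (1 - p i) / Real.sqrt (p i * (1 - p i)) else 1))
        * ∏ i ∈ univ \ X, (if i ∈ T then (-p i) / Real.sqrt (p i * (1 - p i)) else 1) := by
  unfold vWeighted
  have h1 : ∏ i ∈ T, ((if i ∈ X then (1 : ℝ) else 0) - p i) / Real.sqrt (p i * (1 - p i))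
      = ∏ i ∈ (univ : Finset (Fin n)),
          (if i ∈ T then ((if i ∈ X then (1 : ℝ) else 0) - p i) / Real.sqrt (p i * (1 - p i))
           else 1) := by
    rw [← Finset.prod_subset (subset_univ T) (fun i (_ : i ∈ univ) (hi : i ∉ T) =>
      (if_neg hi : (if i ∈ T then ((if i ∈ X then (1:ℝ) else 0) - p i) /
        Real.sqrt (p i * (1 - p i)) else 1) = 1))]
    exact Finset.prod_congr rfl (fun i hi => (if_pos hi).symm)
  rw [h1, ← Finset.prod_sdiff (subset_univ X), mul_comm]
  congr 1
  · exact Finset.prod_congr rfl (fun i hi => by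
      by_cases hiT : i ∈ T <;> simp [hiT, if_pos hi])
  · exact Finset.prod_congr rfl (fun i hi => by
      have : i ∉ X := (mem_sdiff.1 hi).2
      by_cases hiT : i ∈ T <;> simp [hiT, this])

lemma inner_ind_v' {n : ℕ} {p : Fin n → ℝ} (hp : ∀ i, p i ∈ Set.Ioo (0 : ℝ) 1)
    (R T : Finset (Fin n)) :
    ∑ X : Finset (Fin n), prodWeight p X * ((if R ⊆ X then (1:ℝ) else 0) * vWeighted p T X)
      = if T ⊆ R then (∏ i ∈ T, Real.sqrt (p i * (1 - p i))) * ∏ i ∈ R \ T, p i else 0 := by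
  set σ : Fin n → ℝ := fun i => Real.sqrt (p i * (1 - p i)) with hσ
  set A : Fin n → ℝ := fun i => p i * (if i ∈ T then (1 - p i) / σ i else 1) with hA
  set B : Fin n → ℝ := fun i =>
    (1 - p i) * ((if i ∈ R then (0:ℝ) else 1) * (if i ∈ T then (-p i) / σ i else 1)) with hB
  have step1 : ∀ X : Finset (Fin n),
      prodWeight p X * ((if R ⊆ X then (1:ℝ) else 0) * vWeighted p T X)
        = (∏ i ∈ X, A i) * ∏ i ∈ univ \ X, B i := by
    intro X
    rw [ind_eq' p R X, v_eq' p T X]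
    simp only [hA, hB, prodWeight]
    rw [Finset.prod_mul_distrib, Finset.prod_mul_distrib, Finset.prod_mul_distrib]
    ring
  rw [Finset.sum_congr rfl (fun X _ => step1 X)]
  have step2 : ∑ X : Finset (Fin n), (∏ i ∈ X, A i) * ∏ i ∈ univ \ X, B i
      = ∏ i : Fin n, (A i + B i) := by
    rw [Finset.prod_add, Finset.powerset_univ]
  rw [step2]
  by_cases hTR : T ⊆ R
  · rw [if_pos hTR]
    have hpt : ∀ i : Fin n, A i + B i = if i ∈ T then σ i else if i ∈ R then p i else 1 := by
      intro i
      simp only [hA, hB]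
      by_cases hiT : i ∈ T
      · rw [if_pos hiT, if_pos hiT, if_pos (hTR hiT), if_pos hiT]
        have h0 : σ i ≠ 0 := sigma_ne' hp i
        field_simp
        rw [neg_zero, add_zero, mul_one, sq]
        exact (sigma_sq' hp i).symm
      · by_cases hiR : i ∈ R
        · simp [hiT, hiR]
        · simp [hiT, hiR]
    rw [Finset.prod_congr rfl (fun i _ => hpt i), ← Finset.prod_sdiff (subset_univ T)]
    have h2 : ∏ i ∈ univ \ T, (if i ∈ T then σ i else if i ∈ R then p i else 1)
        = ∏ i ∈ R \ T, p i := by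
      rw [Finset.prod_congr rfl (fun i hi => if_neg ((mem_sdiff.1 hi).2) :
        ∀ i ∈ univ \ T, (if i ∈ T then σ i else if i ∈ R then p i else 1)
          = if i ∈ R then p i else 1)]
      rw [← Finset.prod_subset (show R \ T ⊆ univ \ T from
        sdiff_subset_sdiff (subset_univ R) le_rfl)
        (fun i _ hi => if_neg (fun hiR => hi (mem_sdiff.2 ⟨hiR, (mem_sdiff.1 ‹i ∈ univ \ T›).2⟩)))]
      exact Finset.prod_congr rfl (fun i hi => if_pos (mem_sdiff.1 hi).1)
    rw [h2, Finset.prod_congr rfl (fun i (hi : i ∈ T) => if_pos hi), mul_comm]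
  · rw [if_neg hTR]
    obtain ⟨i, hiT, hiR⟩ := Finset.not_subset.1 hTR
    refine Finset.prod_eq_zero (mem_univ i) ?_
    simp only [hA, hB, if_pos hiT, if_neg hiR]
    ring

lemma wInner_expand' {n : ℕ} {p : Fin n → ℝ} (hp : ∀ i, p i ∈ Set.Ioo (0 : ℝ) 1)
    (f : Finset (Fin n) → ℝ) (T : Finset (Fin n)) :
    wInner p f (vWeighted p T)
      = ∑ R : Finset (Fin n), moebius f R *
          (if T ⊆ R then (∏ i ∈ T, Real.sqrt (p i * (1 - p i))) * ∏ i ∈ R \ T, p i else 0) := by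
  have hf : ∀ X : Finset (Fin n),
      f X = ∑ R : Finset (Fin n), moebius f R * (if R ⊆ X then (1:ℝ) else 0) := by
    intro X
    rw [← moebius_inv' f X]
    rw [show X.powerset = univ.filter (fun R => R ⊆ X) by ext R; simp [mem_powerset]]
    rw [Finset.sum_filter]
    exact Finset.sum_congr rfl fun R _ => by split <;> simp
  unfold wInner
  have h1 : ∀ X : Finset (Fin n), prodWeight p X * (f X * vWeighted p T X)
      = ∑ R : Finset (Fin n),
          moebius f R * (prodWeight p X * ((if R ⊆ X then (1:ℝ) else 0) * vWeighted p T X)) := by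
    intro X
    rw [hf X, Finset.sum_mul, Finset.mul_sum]
    exact Finset.sum_congr rfl fun R _ => by ring
  rw [Finset.sum_congr rfl (fun X _ => h1 X), Finset.sum_comm]
  exact Finset.sum_congr rfl fun R _ => by rw [← Finset.mul_sum, inner_ind_v' hp R T]
end Aux


/-- `Φ_{B,p}(f,S) = Σ_{T⊆N, T∩S≠∅} a(T) Π_{i∈T∖S} p_i`. -/
theorem wBanzhafInfluence_eq_moebius_sum (n : ℕ) (p : Fin n → ℝ)
    (hp : ∀ i, p i ∈ Set.Ioo (0 : ℝ) 1) (f : Finset (Fin n) → ℝ) (S : Finset (Fin n)) :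
    wBanzhafInfluence p f S
      = ∑ T ∈ (univ : Finset (Finset (Fin n))).filter (fun T => (T ∩ S).Nonempty),
          moebius f T * ∏ i ∈ T \ S, p i := by
  unfold wBanzhafInfluence bestApprox
  rw [← Finset.sum_sub_distrib]
  have hTterm : ∀ T ∈ S.powerset,
      wInner p f (vWeighted p T) * vWeighted p T S
        - wInner p f (vWeighted p T) * vWeighted p T ∅
      = ∑ R : Finset (Fin n), moebius f R *
          (if T ⊆ R then (∏ i ∈ R \ T, p i) *
            ((∏ i ∈ T, (1 - p i)) - ∏ i ∈ T, (-p i)) else 0) := by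
    intro T hT
    rw [mem_powerset] at hT
    rw [← mul_sub, wInner_expand' hp f T, Finset.sum_mul]
    refine Finset.sum_congr rfl fun R _ => ?_
    rw [mul_assoc]
    congr 1
    by_cases h : T ⊆ R
    · rw [if_pos h, if_pos h]
      have hvS : vWeighted p T S
          = ∏ i ∈ T, ((1 - p i) / Real.sqrt (p i * (1 - p i))) := by
        exact Finset.prod_congr rfl fun i hi => by rw [if_pos (hT hi)]
      have hv0 : vWeighted p T ∅
          = ∏ i ∈ T, ((-p i) / Real.sqrt (p i * (1 - p i))) := by
        refine Finset.prod_congr rfl fun i hi => ?_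
        rw [if_neg (notMem_empty i)]
        ring
      have hk : ∀ c : Fin n → ℝ,
          (∏ i ∈ T, Real.sqrt (p i * (1 - p i)))
            * ∏ i ∈ T, (c i / Real.sqrt (p i * (1 - p i))) = ∏ i ∈ T, c i := by
        intro c
        rw [← Finset.prod_mul_distrib]
        exact Finset.prod_congr rfl fun i hi =>
          mul_div_cancel₀ (c i) (sigma_ne' hp i)
      have e1 : (∏ i ∈ T, Real.sqrt (p i * (1 - p i)))
            * ∏ i ∈ T, ((1 - p i) / Real.sqrt (p i * (1 - p i)))
          = ∏ i ∈ T, (1 - p i) := hk fun i => 1 - p i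
      have e2 : (∏ i ∈ T, Real.sqrt (p i * (1 - p i)))
            * ∏ i ∈ T, ((-p i) / Real.sqrt (p i * (1 - p i)))
          = ∏ i ∈ T, (-p i) := hk fun i => -p i
      rw [hvS, hv0]
      calc ((∏ i ∈ T, Real.sqrt (p i * (1 - p i))) * ∏ i ∈ R \ T, p i) *
            ((∏ i ∈ T, ((1 - p i) / Real.sqrt (p i * (1 - p i))))
              - ∏ i ∈ T, ((-p i) / Real.sqrt (p i * (1 - p i))))
          = (∏ i ∈ R \ T, p i) *
              ((∏ i ∈ T, Real.sqrt (p i * (1 - p i)))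
                  * ∏ i ∈ T, ((1 - p i) / Real.sqrt (p i * (1 - p i)))
                - (∏ i ∈ T, Real.sqrt (p i * (1 - p i)))
                  * ∏ i ∈ T, ((-p i) / Real.sqrt (p i * (1 - p i)))) := by ring
        _ = (∏ i ∈ R \ T, p i) * ((∏ i ∈ T, (1 - p i)) - ∏ i ∈ T, (-p i)) := by
            rw [e1, e2]
    · rw [if_neg h, if_neg h, zero_mul]
  rw [Finset.sum_congr rfl hTterm, Finset.sum_comm, Finset.sum_filter]
  refine Finset.sum_congr rfl fun R _ => ?_
  have hinner : ∑ T ∈ S.powerset,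
      (if T ⊆ R then (∏ i ∈ R \ T, p i) *
        ((∏ i ∈ T, (1 - p i)) - ∏ i ∈ T, (-p i)) else 0)
      = if (R ∩ S).Nonempty then ∏ i ∈ R \ S, p i else 0 := by
    rw [← Finset.sum_filter]
    have hps : S.powerset.filter (fun T => T ⊆ R) = (R ∩ S).powerset := by
      ext T
      simp only [mem_filter, mem_powerset, subset_inter_iff]
      tauto
    rw [hps]
    have hsplit : ∀ T ∈ (R ∩ S).powerset,
        (∏ i ∈ R \ T, p i) * ((∏ i ∈ T, (1 - p i)) - ∏ i ∈ T, (-p i))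
        = (∏ i ∈ R \ S, p i) *
            (((∏ i ∈ T, (1 - p i)) * ∏ i ∈ (R ∩ S) \ T, p i)
              - (∏ i ∈ T, (-p i)) * ∏ i ∈ (R ∩ S) \ T, p i) := by
      intro T hT
      rw [mem_powerset] at hT
      have hRT : R \ T = (R \ S) ∪ ((R ∩ S) \ T) := by
        ext i
        simp only [mem_sdiff, mem_union, mem_inter]
        constructor
        · rintro ⟨hiR, hiT⟩
          by_cases hiS : i ∈ S
          · exact Or.inr ⟨⟨hiR, hiS⟩, hiT⟩
          · exact Or.inl ⟨hiR, hiS⟩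
        · rintro (⟨hiR, hiS⟩ | ⟨⟨hiR, _⟩, hiT⟩)
          · exact ⟨hiR, fun hiT => hiS (mem_inter.1 (hT hiT)).2⟩
          · exact ⟨hiR, hiT⟩
      have hdisj : Disjoint (R \ S) ((R ∩ S) \ T) :=
        disjoint_left.2 fun i hi1 hi2 =>
          (mem_sdiff.1 hi1).2 (mem_inter.1 (mem_sdiff.1 hi2).1).2
      rw [hRT, Finset.prod_union hdisj]
      ring
    rw [Finset.sum_congr rfl hsplit, ← Finset.mul_sum, Finset.sum_sub_distrib]
    rw [← Finset.prod_add (fun i => 1 - p i) p (R ∩ S)]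
    rw [← Finset.prod_add (fun i => -p i) p (R ∩ S)]
    have hone : ∏ i ∈ R ∩ S, ((1 - p i) + p i) = 1 := by
      refine Finset.prod_eq_one fun i _ => by ring
    have hzero : ∏ i ∈ R ∩ S, ((-p i) + p i) = if (R ∩ S) = ∅ then 1 else 0 := by
      rcases Finset.eq_empty_or_nonempty (R ∩ S) with h | h
      · simp [h]
      · rw [if_neg (nonempty_iff_ne_empty.1 h)]
        obtain ⟨i, hi⟩ := h
        exact Finset.prod_eq_zero hi (by ring)
    rw [hone, hzero]
    rcases Finset.eq_empty_or_nonempty (R ∩ S) with h | h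
    · rw [if_pos h, if_neg (by simp [h])]
      ring
    · rw [if_neg (nonempty_iff_ne_empty.1 h), if_pos h]
      ring
  rw [← Finset.mul_sum, hinner, mul_ite, mul_zero]
end
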